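/- arXiv:0704.2025 — 2 statements merged into one kernel-verified Lean document; each statement's English description precedes it below -/
import Mathlib

section
/- (Martins' inequality) For every integer n ≥ 1 and real r > 0, ((1/n)Σ_{i=1}^n i^r / ((1/(n+1))Σ_{i=1}^{n+1} i^r))^{1/r} < (n!)^{1/n} / ((n+1)!)^{1/(n+1)}. -/
open Real Finset

-- m! ≤ (m+1)^m
lemma mart_fact_le_pow (m : ℕ) : m.factorial ≤ (m+1)^m := by
  induction m with
  | zero => simp
  | succ k ih =>
    calc (k+1).factorial = (k+1) * k.factorial := rfl
      _ ≤ (k+1) * (k+1)^k := Nat.mul_le_mul_left _ ih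
      _ = (k+1)^(k+1) := by rw [pow_succ]; ring
      _ ≤ (k+2)^(k+1) := Nat.pow_le_pow_left (by omega) _

-- (1+1/k)^k monotone, integer-cleared form
lemma mart_emono (k : ℕ) (hk : 1 ≤ k) :
    ((k:ℝ)+1)^(2*k+1) ≤ (k:ℝ)^k * ((k:ℝ)+2)^(k+1) := by
  have hx : (0:ℝ) < k := by exact_mod_cast hk
  set x : ℝ := (k:ℝ) with hxdef
  have hx1 : (0:ℝ) < x + 1 := by linarith
  have hsq : (1:ℝ) ≤ (x+1)^2 := by nlinarith
  have hdiv : 1/(x+1)^2 ≤ 1 := by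
    rw [div_le_one (by positivity)]
    exact hsq
  have hber := one_add_mul_le_pow (a := -(1/(x+1)^2))
    (by linarith) (k+1)
  have e1 : 1 + ((k:ℕ)+1 : ℕ) * (-(1/(x+1)^2)) = x/(x+1) := by
    push_cast
    field_simp
    ring
  have e2 : (1 + -(1/(x+1)^2)) = x*(x+2)/(x+1)^2 := by
    field_simp
    ring
  rw [e1, e2, div_pow] at hber
  rw [div_le_div_iff₀ hx1 (by positivity)] at hber
  have hl : x * (((x+1)^2)^(k+1)) = (x*(x+1)) * (x+1)^(2*k+1) := by
    rw [← pow_mul]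
    have : 2*(k+1) = (2*k+1)+1 := by ring
    rw [this, pow_succ]
    ring
  have hr' : (x*(x+2))^(k+1) * (x+1) = (x*(x+1)) * (x^k * (x+2)^(k+1)) := by
    rw [mul_pow, pow_succ]
    ring
  rw [hl, hr'] at hber
  exact le_of_mul_le_mul_left hber (by positivity)

-- the key combinatorial inequality C(n)
lemma mart_C (n : ℕ) (hn : 1 ≤ n) :
    ((n:ℝ)+1)^(n*(n+2)) ≤ (n.factorial : ℝ) * ((n:ℝ)+2)^(n*(n+1)) := by
  induction n with
  | zero => omega
  | succ m ih =>
    rcases Nat.lt_or_ge m 1 with hm | hm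
    · interval_cases m
      norm_num
    · have ihm := ih hm
      have hE : ((m:ℝ)+2)^(2*m+3) ≤ ((m:ℝ)+1)^(m+1) * ((m:ℝ)+3)^(m+2) := by
        have h := mart_emono (m+1) (by omega)
        push_cast at h
        convert h using 2 <;> first | omega | ring
      have hm0 : (0:ℝ) < (m:ℝ) + 1 := by positivity
      have hq : (0:ℝ) < (m:ℝ) + 2 := by positivity
      suffices h : ((m:ℝ)+2)^((m+1)*(m+3)) ≤ ((m+1).factorial : ℝ) * ((m:ℝ)+3)^((m+1)*(m+2)) by
        convert h using 2 <;> first | omega | (push_cast; ring)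
      have hpos : (0:ℝ) < ((m:ℝ)+2)^(m*(m+1)) := by positivity
      have key : ((m:ℝ)+2)^((m+1)*(m+3)) * ((m:ℝ)+2)^(m*(m+1)) ≤
          (((m+1).factorial : ℝ) * ((m:ℝ)+3)^((m+1)*(m+2))) * ((m:ℝ)+2)^(m*(m+1)) := by
        have c1 : ((m:ℝ)+2)^((m+1)*(m+3)) * ((m:ℝ)+2)^(m*(m+1)) =
            (((m:ℝ)+2)^(2*m+3))^(m+1) := by
          rw [← pow_add, ← pow_mul]
          congr 1
          ring
        have c2 : (((m:ℝ)+1)^(m+1) * ((m:ℝ)+3)^(m+2))^(m+1) =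
            ((m:ℝ)+1)^((m+1)*(m+1)) * ((m:ℝ)+3)^((m+1)*(m+2)) := by
          rw [mul_pow, ← pow_mul, ← pow_mul]
          congr 2 <;> ring
        have step1 : (((m:ℝ)+2)^(2*m+3))^(m+1) ≤
            (((m:ℝ)+1)^(m+1) * ((m:ℝ)+3)^(m+2))^(m+1) :=
          pow_le_pow_left₀ (by positivity) hE _
        have step2 : ((m:ℝ)+1)^((m+1)*(m+1)) ≤
            ((m+1).factorial : ℝ) * ((m:ℝ)+2)^(m*(m+1)) := by
          have e3 : ((m:ℝ)+1)^((m+1)*(m+1)) = ((m:ℝ)+1)^(m*(m+2)) * ((m:ℝ)+1) := by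
            rw [← pow_succ]
            congr 1
            ring
          have e4 : ((m+1).factorial : ℝ) = ((m:ℝ)+1) * (m.factorial : ℝ) := by
            rw [Nat.factorial_succ]
            push_cast
            ring
          rw [e3, e4]
          calc ((m:ℝ)+1)^(m*(m+2)) * ((m:ℝ)+1)
              ≤ ((m.factorial:ℝ) * ((m:ℝ)+2)^(m*(m+1))) * ((m:ℝ)+1) := by
                apply mul_le_mul_of_nonneg_right ihm (by positivity)
            _ = ((m:ℝ)+1) * (m.factorial:ℝ) * ((m:ℝ)+2)^(m*(m+1)) := by ring
        calc ((m:ℝ)+2)^((m+1)*(m+3)) * ((m:ℝ)+2)^(m*(m+1))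
            = (((m:ℝ)+2)^(2*m+3))^(m+1) := c1
          _ ≤ (((m:ℝ)+1)^(m+1) * ((m:ℝ)+3)^(m+2))^(m+1) := step1
          _ = ((m:ℝ)+1)^((m+1)*(m+1)) * ((m:ℝ)+3)^((m+1)*(m+2)) := c2
          _ ≤ (((m+1).factorial : ℝ) * ((m:ℝ)+2)^(m*(m+1))) * ((m:ℝ)+3)^((m+1)*(m+2)) := by
              apply mul_le_mul_of_nonneg_right step2 (by positivity)
          _ = (((m+1).factorial : ℝ) * ((m:ℝ)+3)^((m+1)*(m+2))) * ((m:ℝ)+2)^(m*(m+1)) := by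
              ring
      exact le_of_mul_le_mul_right key hpos

-- two-point convexity bound for exp
lemma mart_two_point (r u v x : ℝ) (huv : u < v) (hu : u ≤ x) (hv : x ≤ v) :
    (v - u) * Real.exp (r*x) ≤ (v - x) * Real.exp (r*u) + (x - u) * Real.exp (r*v) := by
  have hvu : (0:ℝ) < v - u := by linarith
  have h0a : (0:ℝ) ≤ (v - x)/(v - u) := div_nonneg (by linarith) hvu.le
  have h0b : (0:ℝ) ≤ (x - u)/(v - u) := div_nonneg (by linarith) hvu.le
  have hab : (v - x)/(v - u) + (x - u)/(v - u) = 1 := by field_simp; ring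
  have hc := convexOn_exp.2 (Set.mem_univ (r*u)) (Set.mem_univ (r*v)) h0a h0b hab
  simp only [smul_eq_mul] at hc
  have harg : (v - x) / (v - u) * (r * u) + (x - u) / (v - u) * (r * v) = r * x := by
    field_simp
    ring
  rw [harg] at hc
  have h2 := mul_le_mul_of_nonneg_left hc hvu.le
  calc (v-u) * Real.exp (r*x)
      ≤ (v-u) * ((v-x)/(v-u) * Real.exp (r*u) + (x-u)/(v-u) * Real.exp (r*v)) := h2
    _ = (v - x) * Real.exp (r*u) + (x - u) * Real.exp (r*v) := by
        field_simp

noncomputable def Gr (r : ℝ) (m : ℕ) : ℝ := (m.factorial : ℝ) ^ (r / (m:ℝ))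

lemma Gr_pos (r : ℝ) (m : ℕ) : 0 < Gr r m :=
  Real.rpow_pos_of_pos (by exact_mod_cast m.factorial_pos) _

-- key lemma
lemma mart_KL (r : ℝ) (n : ℕ) (hn : 1 ≤ n) :
    ((n:ℝ)+1)^r * (((n:ℝ)+2) * Gr r (n+2) - ((n:ℝ)+1) * Gr r (n+1)) ≤
    ((n:ℝ)+2)^r * (((n:ℝ)+1) * Gr r (n+1) - (n:ℝ) * Gr r n) := by
  have hn0 : (0:ℝ) < n := by exact_mod_cast hn
  have hp : (0:ℝ) < (n:ℝ)+1 := by linarith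
  have hq : (0:ℝ) < (n:ℝ)+2 := by linarith
  set ln1 := Real.log ((n:ℝ)+1) with hln1
  set ln2 := Real.log ((n:ℝ)+2) with hln2
  set F0 := Real.log (n.factorial : ℝ) with hF0
  set x1 := ln1 + (ln2 + ln1 + F0)/((n:ℝ)+2) with hx1
  set x2 := ln1 + (ln1 + F0)/((n:ℝ)+1) with hx2
  set x3 := ln2 + (ln1 + F0)/((n:ℝ)+1) with hx3
  set x4 := ln2 + F0/(n:ℝ) with hx4
  have hfact0 : (0:ℝ) < (n.factorial : ℝ) := by exact_mod_cast n.factorial_pos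
  have hcast1 : ((n+1).factorial : ℝ) = ((n:ℝ)+1) * (n.factorial : ℝ) := by
    rw [Nat.factorial_succ]; push_cast; ring
  have hcast2 : ((n+2).factorial : ℝ) = ((n:ℝ)+2) * (((n:ℝ)+1) * (n.factorial : ℝ)) := by
    rw [show n+2 = (n+1)+1 from rfl, Nat.factorial_succ, Nat.factorial_succ]; push_cast; ring
  have hlogF1 : Real.log (((n+1).factorial : ℝ)) = ln1 + F0 := by
    rw [hcast1, Real.log_mul hp.ne' hfact0.ne']
  have hlogF2 : Real.log (((n+2).factorial : ℝ)) = ln2 + ln1 + F0 := by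
    rw [hcast2, Real.log_mul hq.ne' (by positivity), Real.log_mul hp.ne' hfact0.ne']
    ring
  -- bridges
  have hG0 : Gr r n = Real.exp (r * (F0/(n:ℝ))) := by
    rw [Gr, Real.rpow_def_of_pos hfact0]
    congr 1; ring
  have hG1 : Gr r (n+1) = Real.exp (r * ((ln1 + F0)/((n:ℝ)+1))) := by
    rw [Gr, Real.rpow_def_of_pos (by positivity)]
    push_cast
    rw [hlogF1]
    congr 1; ring
  have hG2 : Gr r (n+2) = Real.exp (r * ((ln2 + ln1 + F0)/((n:ℝ)+2))) := by
    rw [Gr, Real.rpow_def_of_pos (by positivity)]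
    push_cast
    rw [hlogF2]
    congr 1; ring
  have hpr : ((n:ℝ)+1)^r = Real.exp (r * ln1) := by
    rw [Real.rpow_def_of_pos hp]; congr 1; ring
  have hqr : ((n:ℝ)+2)^r = Real.exp (r * ln2) := by
    rw [Real.rpow_def_of_pos hq]; congr 1; ring
  have hE1 : ((n:ℝ)+1)^r * Gr r (n+2) = Real.exp (r * x1) := by
    rw [hpr, hG2, ← Real.exp_add, hx1]; congr 1; ring
  have hE2 : ((n:ℝ)+1)^r * Gr r (n+1) = Real.exp (r * x2) := by
    rw [hpr, hG1, ← Real.exp_add, hx2]; congr 1; ring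
  have hE3 : ((n:ℝ)+2)^r * Gr r (n+1) = Real.exp (r * x3) := by
    rw [hqr, hG1, ← Real.exp_add, hx3]; congr 1; ring
  have hE4 : ((n:ℝ)+2)^r * Gr r n = Real.exp (r * x4) := by
    rw [hqr, hG0, ← Real.exp_add, hx4]; congr 1; ring
  -- log inequalities
  have hln12 : ln1 < ln2 := Real.log_lt_log hp (by linarith)
  have hF0le : F0 ≤ (n:ℝ) * ln1 := by
    have h := mart_fact_le_pow n
    have h' : (n.factorial : ℝ) ≤ ((n:ℝ)+1)^n := by exact_mod_cast h
    calc F0 ≤ Real.log (((n:ℝ)+1)^n) := Real.log_le_log hfact0 h'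
      _ = (n:ℝ) * ln1 := by rw [Real.log_pow]
  have hF1le : ln1 + F0 ≤ ((n:ℝ)+1) * ln2 := by
    have h := mart_fact_le_pow (n+1)
    have h' : (((n+1).factorial : ℕ) : ℝ) ≤ ((n:ℝ)+2)^(n+1) := by
      exact_mod_cast h
    calc ln1 + F0 = Real.log (((n+1).factorial : ℝ)) := hlogF1.symm
      _ ≤ Real.log (((n:ℝ)+2)^(n+1)) := Real.log_le_log (by positivity) h'
      _ = ((n:ℝ)+1) * ln2 := by rw [Real.log_pow]; push_cast; ring
  have hlogC : (n:ℝ)*((n:ℝ)+2)*ln1 ≤ F0 + (n:ℝ)*((n:ℝ)+1)*ln2 := by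
    have h := mart_C n hn
    have h1 : Real.log (((n:ℝ)+1)^(n*(n+2))) ≤
        Real.log ((n.factorial : ℝ) * ((n:ℝ)+2)^(n*(n+1))) :=
      Real.log_le_log (by positivity) h
    rw [Real.log_pow, Real.log_mul hfact0.ne' (by positivity), Real.log_pow] at h1
    push_cast at h1
    linarith
  -- orderings
  have h23 : x2 < x3 := by rw [hx2, hx3]; linarith
  have h21 : x2 ≤ x1 := by
    rw [hx2, hx1]
    have : (ln1+F0)/((n:ℝ)+1) ≤ (ln2+ln1+F0)/((n:ℝ)+2) := by
      rw [div_le_div_iff₀ hp hq]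
      linarith [hF1le]
    linarith
  have h13 : x1 ≤ x3 := by
    rw [hx1, hx3]
    have : (ln2+ln1+F0)/((n:ℝ)+2) - (ln1+F0)/((n:ℝ)+1) ≤ ln2 - ln1 := by
      rw [div_sub_div _ _ hq.ne' hp.ne', div_le_iff₀ (by positivity)]
      have hint : ((n:ℝ)+1) * ln1 ≤ ((n:ℝ)+1) * ln2 :=
        mul_le_mul_of_nonneg_left hln12.le hp.le
      linarith [hlogC, hint]
    linarith
  have h24 : x2 ≤ x4 := by
    rw [hx2, hx4]
    have : (ln1+F0)/((n:ℝ)+1) - F0/(n:ℝ) ≤ ln2 - ln1 := by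
      rw [div_sub_div _ _ hp.ne' hn0.ne', div_le_iff₀ (by positivity)]
      linarith [hlogC]
    linarith
  have h43 : x4 ≤ x3 := by
    rw [hx4, hx3]
    have : F0/(n:ℝ) ≤ (ln1+F0)/((n:ℝ)+1) := by
      rw [div_le_div_iff₀ hn0 hp]
      linarith [hF0le]
    linarith
  -- weighted mean identity
  have hid : ((n:ℝ)+2)*x1 + (n:ℝ)*x4 = ((n:ℝ)+1)*x2 + ((n:ℝ)+1)*x3 := by
    rw [hx1, hx2, hx3, hx4]
    field_simp
    ring
  -- two applications of two-point
  have hA := mart_two_point r x2 x3 x1 h23 h21 h13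
  have hB := mart_two_point r x2 x3 x4 h23 h24 h43
  have hd : (0:ℝ) < x3 - x2 := by linarith
  -- combine
  have key : (x3 - x2) * (((n:ℝ)+2) * Real.exp (r*x1) + (n:ℝ) * Real.exp (r*x4)) ≤
      (x3 - x2) * (((n:ℝ)+1) * Real.exp (r*x2) + ((n:ℝ)+1) * Real.exp (r*x3)) := by
    have hA' := mul_le_mul_of_nonneg_left hA (by linarith : (0:ℝ) ≤ (n:ℝ)+2)
    have hB' := mul_le_mul_of_nonneg_left hB (by linarith : (0:ℝ) ≤ (n:ℝ))
    have e2c : ((n:ℝ)+2)*(x3-x1) + (n:ℝ)*(x3-x4) = ((n:ℝ)+1)*(x3-x2) := by linarith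
    have e3c : ((n:ℝ)+2)*(x1-x2) + (n:ℝ)*(x4-x2) = ((n:ℝ)+1)*(x3-x2) := by linarith
    have m2 : (((n:ℝ)+2)*(x3-x1) + (n:ℝ)*(x3-x4)) * Real.exp (r*x2) =
        (((n:ℝ)+1)*(x3-x2)) * Real.exp (r*x2) := by rw [e2c]
    have m3 : (((n:ℝ)+2)*(x1-x2) + (n:ℝ)*(x4-x2)) * Real.exp (r*x3) =
        (((n:ℝ)+1)*(x3-x2)) * Real.exp (r*x3) := by rw [e3c]
    linarith [hA', hB', m2, m3]
  have key2 : ((n:ℝ)+2) * Real.exp (r*x1) + (n:ℝ) * Real.exp (r*x4) ≤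
      ((n:ℝ)+1) * Real.exp (r*x2) + ((n:ℝ)+1) * Real.exp (r*x3) :=
    le_of_mul_le_mul_left key hd
  rw [← hE1, ← hE2, ← hE3, ← hE4] at key2
  linarith [key2]

lemma mart_D_pos (r : ℝ) (hr : 0 < r) (n : ℕ) (hn : 1 ≤ n) :
    0 < ((n:ℝ)+1) * Gr r (n+1) - (n:ℝ) * Gr r n := by
  have hn0 : (0:ℝ) < n := by exact_mod_cast hn
  have hfact0 : (0:ℝ) < (n.factorial : ℝ) := by exact_mod_cast n.factorial_pos
  have hmono : Gr r n ≤ Gr r (n+1) := by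
    rw [Gr, Gr, Real.rpow_def_of_pos hfact0, Real.rpow_def_of_pos (by positivity)]
    apply Real.exp_le_exp.2
    have hF1 : Real.log (((n+1).factorial : ℕ) : ℝ) =
        Real.log ((n:ℝ)+1) + Real.log (n.factorial : ℝ) := by
      rw [Nat.factorial_succ]
      push_cast
      rw [Real.log_mul (by positivity) hfact0.ne']
    have hF0le : Real.log (n.factorial : ℝ) ≤ (n:ℝ) * Real.log ((n:ℝ)+1) := by
      have h' : (n.factorial : ℝ) ≤ ((n:ℝ)+1)^n := by exact_mod_cast mart_fact_le_pow n
      calc Real.log (n.factorial : ℝ) ≤ Real.log (((n:ℝ)+1)^n) := Real.log_le_log hfact0 h'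
        _ = (n:ℝ) * Real.log ((n:ℝ)+1) := by rw [Real.log_pow]
    rw [hF1]
    push_cast
    have hdd : Real.log (n.factorial : ℝ) / (n:ℝ) ≤
        (Real.log ((n:ℝ)+1) + Real.log (n.factorial : ℝ)) / ((n:ℝ)+1) := by
      rw [div_le_div_iff₀ hn0 (by positivity)]
      linarith [hF0le]
    have h3 := mul_le_mul_of_nonneg_left hdd hr.le
    have e1 : Real.log (n.factorial:ℝ) * (r/(n:ℝ)) = r * (Real.log (n.factorial:ℝ) / (n:ℝ)) := by
      ring
    have e2 : (Real.log ((n:ℝ)+1) + Real.log (n.factorial:ℝ)) * (r/((n:ℝ)+1)) =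
        r * ((Real.log ((n:ℝ)+1) + Real.log (n.factorial:ℝ)) / ((n:ℝ)+1)) := by ring
    rw [e1, e2]
    exact h3
  have h1 : (0:ℝ) < Gr r n := Gr_pos r n
  nlinarith [hmono, h1]

lemma mart_Q (r : ℝ) (hr : 0 < r) : ∀ n : ℕ, 1 ≤ n →
    (∑ i ∈ Icc 1 n, (i:ℝ)^r) * (((n:ℝ)+1) * Gr r (n+1) - (n:ℝ) * Gr r n) <
    (n:ℝ) * ((n:ℝ)+1)^r * Gr r n := by
  refine Nat.le_induction ?_ ?_
  · -- base case n = 1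
    have hs : (∑ i ∈ Icc (1:ℕ) 1, (i:ℝ)^r) = 1 := by
      rw [Finset.Icc_self, Finset.sum_singleton]
      push_cast
      exact Real.one_rpow r
    have hg1 : Gr r 1 = 1 := by
      rw [Gr, Nat.factorial_one]
      push_cast
      exact Real.one_rpow _
    have hg2 : Gr r 2 = (2:ℝ) ^ (r/2) := by
      rw [Gr]
      norm_num
    rw [hs, hg1, hg2]
    push_cast
    set t := (2:ℝ) ^ (r/2) with ht
    have ht1 : 1 < t := by
      rw [ht]
      exact Real.one_lt_rpow_iff_of_pos (by norm_num) |>.2 (Or.inl ⟨by norm_num, by linarith⟩)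
    have h2r : (1+1:ℝ)^r = t^2 := by
      rw [ht, ← Real.rpow_natCast ((2:ℝ)^(r/2)) 2, ← Real.rpow_mul (by norm_num)]
      norm_num
    rw [h2r]
    nlinarith [sq_nonneg (t-1), ht1]
  · -- inductive step
    intro n hn IH
    have hKL := mart_KL r n hn
    have hDn := mart_D_pos r hr n hn
    have hDn1 := mart_D_pos r hr (n+1) (by omega)
    push_cast at hDn1
    have hsum : (∑ i ∈ Icc 1 (n+1), (i:ℝ)^r) =
        (∑ i ∈ Icc 1 n, (i:ℝ)^r) + ((n:ℝ)+1)^r := by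
      rw [Finset.sum_Icc_succ_top (by omega)]
      push_cast
      ring
    have hgoal :
        ((∑ i ∈ Icc 1 n, (i:ℝ)^r) + ((n:ℝ)+1)^r) *
          (((n:ℝ)+2) * Gr r (n+2) - ((n:ℝ)+1) * Gr r (n+1)) <
        ((n:ℝ)+1) * ((n:ℝ)+2)^r * Gr r (n+1) := by
      set a := (∑ i ∈ Icc 1 n, (i:ℝ)^r) with hadef
      have h1 := mul_lt_mul_of_pos_right IH hDn1
      have h2 := mul_le_mul_of_nonneg_right hKL
        (mul_nonneg (by positivity) (Gr_pos r (n+1)).le)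
      have key : (((a + ((n:ℝ)+1)^r) *
          (((n:ℝ)+2) * Gr r (n+2) - ((n:ℝ)+1) * Gr r (n+1))) *
          (((n:ℝ)+1) * Gr r (n+1) - (n:ℝ) * Gr r n)) <
          ((((n:ℝ)+1) * ((n:ℝ)+2)^r * Gr r (n+1)) *
          (((n:ℝ)+1) * Gr r (n+1) - (n:ℝ) * Gr r n)) := by
        nlinarith [h1, h2]
      exact lt_of_mul_lt_mul_right key hDn.le
    rw [show n+1+1 = n+2 from rfl]
    push_cast
    rw [hsum]
    convert hgoal using 2 <;> ring

theorem stmt_17 (n : ℕ) (hn : 1 ≤ n) (r : ℝ) (hr : 0 < r) :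
    (((∑ i ∈ Finset.Icc 1 n, (i : ℝ) ^ r) / n) /
        ((∑ i ∈ Finset.Icc 1 (n + 1), (i : ℝ) ^ r) / (n + 1))) ^ (1 / r) <
      (n.factorial : ℝ) ^ ((1 : ℝ) / n) /
        ((n + 1).factorial : ℝ) ^ ((1 : ℝ) / (n + 1)) := by
  have hn0 : (0:ℝ) < n := by exact_mod_cast hn
  have hg0 : 0 < Gr r n := Gr_pos r n
  have hg1 : 0 < Gr r (n+1) := Gr_pos r (n+1)
  have hQ := mart_Q r hr n hn
  have hsum : (∑ i ∈ Icc 1 (n+1), (i:ℝ)^r) =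
      (∑ i ∈ Icc 1 n, (i:ℝ)^r) + ((n:ℝ)+1)^r := by
    rw [Finset.sum_Icc_succ_top (by omega)]
    push_cast
    ring
  have ha : 0 < (∑ i ∈ Icc 1 n, (i:ℝ)^r) := by
    apply Finset.sum_pos
    · intro i hi
      have hi1 : 1 ≤ i := (Finset.mem_Icc.mp hi).1
      exact Real.rpow_pos_of_pos (by exact_mod_cast hi1) r
    · exact Finset.nonempty_Icc.mpr hn
  have hpr : (0:ℝ) < ((n:ℝ)+1)^r := Real.rpow_pos_of_pos (by linarith) r
  have ha' : 0 < (∑ i ∈ Icc 1 (n+1), (i:ℝ)^r) := by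
    rw [hsum]; linarith
  -- P(n)
  have hP : ((n:ℝ)+1) * (∑ i ∈ Icc 1 n, (i:ℝ)^r) * Gr r (n+1) <
      (n:ℝ) * (∑ i ∈ Icc 1 (n+1), (i:ℝ)^r) * Gr r n := by
    rw [hsum]
    nlinarith [hQ]
  -- ratio form
  have hX : ((∑ i ∈ Icc 1 n, (i:ℝ)^r) / (n:ℝ)) /
      ((∑ i ∈ Icc 1 (n+1), (i:ℝ)^r) / ((n:ℝ)+1)) =
      (((n:ℝ)+1) * (∑ i ∈ Icc 1 n, (i:ℝ)^r)) / ((n:ℝ) * (∑ i ∈ Icc 1 (n+1), (i:ℝ)^r)) := by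
    field_simp
  have hXY : ((∑ i ∈ Icc 1 n, (i:ℝ)^r) / (n:ℝ)) /
      ((∑ i ∈ Icc 1 (n+1), (i:ℝ)^r) / ((n:ℝ)+1)) < Gr r n / Gr r (n+1) := by
    rw [hX, div_lt_div_iff₀ (by positivity) hg1]
    linarith [hP]
  -- identify Gr ratio with Y^r
  have hfact0 : (0:ℝ) < (n.factorial : ℝ) := by exact_mod_cast n.factorial_pos
  have hfact1 : (0:ℝ) < ((n+1).factorial : ℝ) := by exact_mod_cast (n+1).factorial_pos
  set Y := (n.factorial : ℝ) ^ ((1 : ℝ) / n) / ((n + 1).factorial : ℝ) ^ ((1 : ℝ) / ((n:ℝ) + 1))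
    with hY
  have hYpos : 0 < Y := by
    rw [hY]
    exact div_pos (Real.rpow_pos_of_pos hfact0 _) (Real.rpow_pos_of_pos hfact1 _)
  have hYr : Y ^ r = Gr r n / Gr r (n+1) := by
    rw [hY, Real.div_rpow (Real.rpow_pos_of_pos hfact0 _).le (Real.rpow_pos_of_pos hfact1 _).le,
      ← Real.rpow_mul hfact0.le, ← Real.rpow_mul hfact1.le, Gr, Gr]
    congr 1
    · congr 1
      ring
    · congr 1
      push_cast
      ring
  have hXpos : 0 < ((∑ i ∈ Icc 1 n, (i:ℝ)^r) / (n:ℝ)) /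
      ((∑ i ∈ Icc 1 (n+1), (i:ℝ)^r) / ((n:ℝ)+1)) := by
    rw [hX]
    exact div_pos (mul_pos (by linarith) ha) (mul_pos hn0 ha')
  have hXr : ((∑ i ∈ Icc 1 n, (i:ℝ)^r) / (n:ℝ)) /
      ((∑ i ∈ Icc 1 (n+1), (i:ℝ)^r) / ((n:ℝ)+1)) < Y ^ r := by
    rw [hYr]
    exact hXY
  have hfin := Real.rpow_lt_rpow hXpos.le hXr (by positivity : (0:ℝ) < 1/r)
  have hYrr : (Y ^ r) ^ ((1:ℝ)/r) = Y := by
    rw [← Real.rpow_mul hYpos.le, mul_one_div_cancel hr.ne', Real.rpow_one]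
  rw [hYrr] at hfin
  exact hfin
end

section
/- (Bennett) For every integer n ≥ 1 and real r ≥ 1, ((1/n)Σ_{i=1}^n i^r / ((1/(n+1))Σ_{i=1}^{n+1} i^r))^{1/r} ≤ (n+1)/(n+2), with the inequality reversed for 0 < r ≤ 1. -/
open Real Finset

private lemma hasDerivAt_aux (r : ℝ) {t : ℝ} (ht : -1 < t) :
    HasDerivAt (fun x : ℝ => (x + 2) ^ r * (x + 1) ^ (1 - r))
      ((t + 2) ^ (r - 1) * (t + 1) ^ (-r) * (t + 2 - r)) t := by
  have h2 : (0:ℝ) < t + 2 := by linarith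
  have h1 : (0:ℝ) < t + 1 := by linarith
  have d1 : HasDerivAt (fun x : ℝ => (x + 2) ^ r) (1 * r * (t + 2) ^ (r - 1)) t :=
    ((hasDerivAt_id t).add_const 2).rpow_const (Or.inl h2.ne')
  have d2 : HasDerivAt (fun x : ℝ => (x + 1) ^ (1 - r)) (1 * (1 - r) * (t + 1) ^ (1 - r - 1)) t :=
    ((hasDerivAt_id t).add_const 1).rpow_const (Or.inl h1.ne')
  have h : HasDerivAt (fun x : ℝ => (x + 2) ^ r * (x + 1) ^ (1 - r)) _ t := d1.mul d2
  convert h using 1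
  have e1 : (t + 2 : ℝ) ^ r = (t + 2) ^ (r - 1) * (t + 2) := by
    rw [← Real.rpow_add_one h2.ne' (r - 1)]; norm_num
  have e2 : (t + 1 : ℝ) ^ (1 - r) = (t + 1) ^ (-r) * (t + 1) := by
    rw [← Real.rpow_add_one h1.ne' (-r), show (-r + 1 : ℝ) = 1 - r from by ring]
  have e3 : (1 : ℝ) - r - 1 = -r := by ring
  rw [e3]
  set a := (t + 2) ^ (r - 1) with ha
  set b := (t + 1) ^ (-r) with hb
  rw [e1, e2]
  ring

private lemma deriv_le_one {r : ℝ} (hr : 1 ≤ r) {c : ℝ} (hc : 0 < c) :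
    (c + 2) ^ (r - 1) * (c + 1) ^ (-r) * (c + 2 - r) ≤ 1 := by
  have hu : (0:ℝ) < c + 2 := by linarith
  have hv : (0:ℝ) < c + 1 := by linarith
  have hvr : (0:ℝ) < (c + 1) ^ r := rpow_pos_of_pos hv r
  have hb := one_add_mul_self_le_rpow_one_add (s := -(1 / (c + 2)))
    (by rw [neg_le, neg_neg, div_le_one hu]; linarith) hr
  have e : (1 : ℝ) + -(1 / (c + 2)) = (c + 1) / (c + 2) := by field_simp; ring
  rw [e, Real.div_rpow hv.le hu.le] at hb
  have hur : (0:ℝ) < (c + 2) ^ r := rpow_pos_of_pos hu r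
  have hb2 := (le_div_iff₀ hur).mp hb
  have e2 : (c + 2 : ℝ) ^ (r - 1) * (c + 2) = (c + 2) ^ r := by
    rw [← Real.rpow_add_one hu.ne']; norm_num
  have key : (c + 2) ^ (r - 1) * (c + 2 - r) ≤ (c + 1) ^ r := by
    have e4 : (1 + r * -(1 / (c + 2))) * (c + 2) ^ r
        = (c + 2) ^ (r - 1) * (c + 2 - r) := by
      rw [← e2]; field_simp; ring
    linarith [hb2, e4.ge, e4.le]
  have hneg : (c + 1 : ℝ) ^ (-r) = ((c + 1) ^ r)⁻¹ := Real.rpow_neg hv.le r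
  calc (c + 2) ^ (r - 1) * (c + 1) ^ (-r) * (c + 2 - r)
      = ((c + 2) ^ (r - 1) * (c + 2 - r)) * ((c + 1) ^ r)⁻¹ := by rw [hneg]; ring
    _ ≤ (c + 1) ^ r * ((c + 1) ^ r)⁻¹ :=
        mul_le_mul_of_nonneg_right key (inv_nonneg.mpr hvr.le)
    _ = 1 := mul_inv_cancel₀ hvr.ne'

private lemma one_le_deriv {r : ℝ} (hr0 : 0 < r) (hr : r ≤ 1) {c : ℝ} (hc : 0 < c) :
    1 ≤ (c + 2) ^ (r - 1) * (c + 1) ^ (-r) * (c + 2 - r) := by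
  have hu : (0:ℝ) < c + 2 := by linarith
  have hv : (0:ℝ) < c + 1 := by linarith
  have hvr : (0:ℝ) < (c + 1) ^ r := rpow_pos_of_pos hv r
  have hb := rpow_one_add_le_one_add_mul_self (s := -(1 / (c + 2)))
    (by rw [neg_le, neg_neg, div_le_one hu]; linarith) hr0.le hr
  have e : (1 : ℝ) + -(1 / (c + 2)) = (c + 1) / (c + 2) := by field_simp; ring
  rw [e, Real.div_rpow hv.le hu.le] at hb
  have hur : (0:ℝ) < (c + 2) ^ r := rpow_pos_of_pos hu r
  have hb2 := (div_le_iff₀ hur).mp hb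
  have e2 : (c + 2 : ℝ) ^ (r - 1) * (c + 2) = (c + 2) ^ r := by
    rw [← Real.rpow_add_one hu.ne']; norm_num
  have key : (c + 1) ^ r ≤ (c + 2) ^ (r - 1) * (c + 2 - r) := by
    have e4 : (1 + r * -(1 / (c + 2))) * (c + 2) ^ r
        = (c + 2) ^ (r - 1) * (c + 2 - r) := by
      rw [← e2]; field_simp; ring
    linarith [hb2, e4.ge, e4.le]
  have hneg : (c + 1 : ℝ) ^ (-r) = ((c + 1) ^ r)⁻¹ := Real.rpow_neg hv.le r
  calc (1:ℝ) = (c + 1) ^ r * ((c + 1) ^ r)⁻¹ := (mul_inv_cancel₀ hvr.ne').symm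
    _ ≤ ((c + 2) ^ (r - 1) * (c + 2 - r)) * ((c + 1) ^ r)⁻¹ :=
        mul_le_mul_of_nonneg_right key (inv_nonneg.mpr hvr.le)
    _ = (c + 2) ^ (r - 1) * (c + 1) ^ (-r) * (c + 2 - r) := by rw [hneg]; ring

private lemma mvt_aux (r : ℝ) {t : ℝ} (ht : 0 ≤ t) :
    ∃ c ∈ Set.Ioo t (t + 1),
      (c + 2) ^ (r - 1) * (c + 1) ^ (-r) * (c + 2 - r)
        = (t + 3) ^ r * (t + 2) ^ (1 - r) - (t + 2) ^ r * (t + 1) ^ (1 - r) := by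
  obtain ⟨c, hc, hceq⟩ := exists_hasDerivAt_eq_slope
    (fun x : ℝ => (x + 2) ^ r * (x + 1) ^ (1 - r))
    (fun x : ℝ => (x + 2) ^ (r - 1) * (x + 1) ^ (-r) * (x + 2 - r))
    (by linarith : t < t + 1)
    (fun x hx => (hasDerivAt_aux r (by simp only [Set.mem_Icc] at hx; linarith)).continuousAt.continuousWithinAt)
    (fun x hx => hasDerivAt_aux r (by simp only [Set.mem_Ioo] at hx; linarith))
  refine ⟨c, hc, ?_⟩
  rw [hceq]
  have e1 : t + 1 + 2 = t + 3 := by ring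
  have e2 : t + 1 + 1 = t + 2 := by ring
  rw [e1, e2]
  have e3 : t + 1 - t = 1 := by ring
  rw [e3, div_one]

private lemma key_le {r : ℝ} (hr : 1 ≤ r) {t : ℝ} (ht : 0 ≤ t) :
    (t + 3) ^ r * (t + 2) ^ (1 - r) ≤ (t + 2) ^ r * (t + 1) ^ (1 - r) + 1 := by
  obtain ⟨c, hc, hceq⟩ := mvt_aux r ht
  have := deriv_le_one hr (by rcases hc with ⟨h1, _⟩; linarith : (0:ℝ) < c)
  linarith [hceq.symm.le, hceq.le]

private lemma key_ge {r : ℝ} (hr0 : 0 < r) (hr : r ≤ 1) {t : ℝ} (ht : 0 ≤ t) :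
    (t + 2) ^ r * (t + 1) ^ (1 - r) + 1 ≤ (t + 3) ^ r * (t + 2) ^ (1 - r) := by
  obtain ⟨c, hc, hceq⟩ := mvt_aux r ht
  have := one_le_deriv hr0 hr (by rcases hc with ⟨h1, _⟩; linarith : (0:ℝ) < c)
  linarith [hceq.symm.le, hceq.le]

private lemma keyP_le {r : ℝ} (hr : 1 ≤ r) {t : ℝ} (ht : 0 ≤ t) :
    (t + 1) ^ r * ((t + 2) * (t + 3) ^ r)
      ≤ (t + 2) ^ r * ((t + 1) * (t + 2) ^ r + (t + 1) ^ r) := by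
  have h1 : (0:ℝ) < t + 1 := by linarith
  have h2 : (0:ℝ) < t + 2 := by linarith
  have hP : (0:ℝ) < (t + 1) ^ r * (t + 2) ^ r :=
    mul_pos (rpow_pos_of_pos h1 r) (rpow_pos_of_pos h2 r)
  have h := mul_le_mul_of_nonneg_left (key_le hr ht) hP.le
  set X1 := (t + 1) ^ r with hX1
  set X2 := (t + 2) ^ r with hX2
  set X3 := (t + 3) ^ r with hX3
  set Y1 := (t + 1) ^ (1 - r) with hY1
  set Y2 := (t + 2) ^ (1 - r) with hY2
  have e1 : Y2 * X2 = t + 2 := by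
    rw [hY2, hX2, ← Real.rpow_add h2]; norm_num
  have e2 : Y1 * X1 = t + 1 := by
    rw [hY1, hX1, ← Real.rpow_add h1]; norm_num
  calc X1 * ((t + 2) * X3)
      = X1 * X2 * (X3 * Y2) := by rw [← e1]; ring
    _ ≤ X1 * X2 * (X2 * Y1 + 1) := h
    _ = X2 * ((t + 1) * X2 + X1) := by rw [← e2]; ring

private lemma keyP_ge {r : ℝ} (hr0 : 0 < r) (hr : r ≤ 1) {t : ℝ} (ht : 0 ≤ t) :
    (t + 2) ^ r * ((t + 1) * (t + 2) ^ r + (t + 1) ^ r)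
      ≤ (t + 1) ^ r * ((t + 2) * (t + 3) ^ r) := by
  have h1 : (0:ℝ) < t + 1 := by linarith
  have h2 : (0:ℝ) < t + 2 := by linarith
  have hP : (0:ℝ) < (t + 1) ^ r * (t + 2) ^ r :=
    mul_pos (rpow_pos_of_pos h1 r) (rpow_pos_of_pos h2 r)
  have h := mul_le_mul_of_nonneg_left (key_ge hr0 hr ht) hP.le
  set X1 := (t + 1) ^ r with hX1
  set X2 := (t + 2) ^ r with hX2
  set X3 := (t + 3) ^ r with hX3
  set Y1 := (t + 1) ^ (1 - r) with hY1
  set Y2 := (t + 2) ^ (1 - r) with hY2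
  have e1 : Y2 * X2 = t + 2 := by
    rw [hY2, hX2, ← Real.rpow_add h2]; norm_num
  have e2 : Y1 * X1 = t + 1 := by
    rw [hY1, hX1, ← Real.rpow_add h1]; norm_num
  calc X2 * ((t + 1) * X2 + X1)
      = X1 * X2 * (X2 * Y1 + 1) := by rw [← e2]; ring
    _ ≤ X1 * X2 * (X3 * Y2) := h
    _ = X1 * ((t + 2) * X3) := by rw [← e1]; ring

private lemma main_le {r : ℝ} (hr : 1 ≤ r) :
    ∀ n : ℕ, 1 ≤ n →
      (∑ i ∈ Finset.Icc 1 n, (i : ℝ) ^ r)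
          * (((n:ℝ) + 1) * ((n:ℝ) + 2) ^ r - (n:ℝ) * ((n:ℝ) + 1) ^ r)
        ≤ (n:ℝ) * (((n:ℝ) + 1) ^ r * ((n:ℝ) + 1) ^ r) := by
  intro n
  induction n with
  | zero => intro h; omega
  | succ m ih =>
    intro _
    rcases Nat.eq_zero_or_pos m with hm | hm
    · subst hm
      have kp := keyP_le hr (le_refl (0:ℝ))
      norm_num at kp ⊢
      nlinarith [kp]
    · have ihm := ih hm
      have hsum : (∑ i ∈ Finset.Icc 1 (m + 1), (i : ℝ) ^ r)
          = (∑ i ∈ Finset.Icc 1 m, (i : ℝ) ^ r) + ((m:ℝ) + 1) ^ r := by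
        rw [Finset.sum_Icc_succ_top (by omega : 1 ≤ m + 1)]
        push_cast
        ring_nf
      have kp := keyP_le hr (Nat.cast_nonneg m : (0:ℝ) ≤ (m:ℝ))
      set S := ∑ i ∈ Finset.Icc 1 m, (i : ℝ) ^ r with hS
      set A := ((m:ℝ) + 1) ^ r with hA
      set B := ((m:ℝ) + 2) ^ r with hB
      set C := ((m:ℝ) + 3) ^ r with hC
      have hApos : (0:ℝ) < A := rpow_pos_of_pos (by positivity) r
      have hBpos : (0:ℝ) < B := rpow_pos_of_pos (by positivity) r
      have hSpos : (0:ℝ) ≤ S := Finset.sum_nonneg fun i _ => rpow_nonneg (Nat.cast_nonneg i) r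
      -- kp : A * (((m:ℝ)+2) * C) ≤ B * (((m:ℝ)+1) * B + A)
      have hstar : A * (((m:ℝ) + 2) * C - ((m:ℝ) + 1) * B) ≤ B * (((m:ℝ) + 1) * B - (m:ℝ) * A) := by
        nlinarith [kp]
      have h1 := mul_le_mul_of_nonneg_left hstar (by linarith : (0:ℝ) ≤ S + A)
      have h2 := mul_le_mul_of_nonneg_left ihm hBpos.le
      have h3 : A * ((S + A) * (((m:ℝ) + 2) * C - ((m:ℝ) + 1) * B))
          ≤ A * (((m:ℝ) + 1) * (B * B)) := by nlinarith [h1, h2]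
      have h4 := le_of_mul_le_mul_left h3 hApos
      rw [hsum]
      push_cast
      rw [show (m:ℝ) + 1 + 1 = (m:ℝ) + 2 from by ring, show (m:ℝ) + 1 + 2 = (m:ℝ) + 3 from by ring,
        ← hB, ← hC]
      nlinarith [h4]

private lemma main_ge {r : ℝ} (hr0 : 0 < r) (hr : r ≤ 1) :
    ∀ n : ℕ, 1 ≤ n →
      (n:ℝ) * (((n:ℝ) + 1) ^ r * ((n:ℝ) + 1) ^ r)
        ≤ (∑ i ∈ Finset.Icc 1 n, (i : ℝ) ^ r)
          * (((n:ℝ) + 1) * ((n:ℝ) + 2) ^ r - (n:ℝ) * ((n:ℝ) + 1) ^ r) := by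
  intro n
  induction n with
  | zero => intro h; omega
  | succ m ih =>
    intro _
    rcases Nat.eq_zero_or_pos m with hm | hm
    · subst hm
      have kp := keyP_ge hr0 hr (le_refl (0:ℝ))
      norm_num at kp ⊢
      nlinarith [kp]
    · have ihm := ih hm
      have hsum : (∑ i ∈ Finset.Icc 1 (m + 1), (i : ℝ) ^ r)
          = (∑ i ∈ Finset.Icc 1 m, (i : ℝ) ^ r) + ((m:ℝ) + 1) ^ r := by
        rw [Finset.sum_Icc_succ_top (by omega : 1 ≤ m + 1)]
        push_cast
        ring_nf
      have kp := keyP_ge hr0 hr (Nat.cast_nonneg m : (0:ℝ) ≤ (m:ℝ))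
      set S := ∑ i ∈ Finset.Icc 1 m, (i : ℝ) ^ r with hS
      set A := ((m:ℝ) + 1) ^ r with hA
      set B := ((m:ℝ) + 2) ^ r with hB
      set C := ((m:ℝ) + 3) ^ r with hC
      have hApos : (0:ℝ) < A := rpow_pos_of_pos (by positivity) r
      have hBpos : (0:ℝ) < B := rpow_pos_of_pos (by positivity) r
      have hSpos : (0:ℝ) ≤ S := Finset.sum_nonneg fun i _ => rpow_nonneg (Nat.cast_nonneg i) r
      have hstar : B * (((m:ℝ) + 1) * B - (m:ℝ) * A) ≤ A * (((m:ℝ) + 2) * C - ((m:ℝ) + 1) * B) := by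
        nlinarith [kp]
      have h1 := mul_le_mul_of_nonneg_left hstar (by linarith : (0:ℝ) ≤ S + A)
      have h2 := mul_le_mul_of_nonneg_left ihm hBpos.le
      have h3 : A * (((m:ℝ) + 1) * (B * B))
          ≤ A * ((S + A) * (((m:ℝ) + 2) * C - ((m:ℝ) + 1) * B)) := by nlinarith [h1, h2]
      have h4 := le_of_mul_le_mul_left h3 hApos
      rw [hsum]
      push_cast
      rw [show (m:ℝ) + 1 + 1 = (m:ℝ) + 2 from by ring, show (m:ℝ) + 1 + 2 = (m:ℝ) + 3 from by ring,
        ← hB, ← hC]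
      nlinarith [h4]

theorem stmt_18 (n : ℕ) (hn : 1 ≤ n) (r : ℝ) :
    (1 ≤ r →
      (((∑ i ∈ Finset.Icc 1 n, (i : ℝ) ^ r) / n) /
          ((∑ i ∈ Finset.Icc 1 (n + 1), (i : ℝ) ^ r) / (n + 1))) ^ (1 / r) ≤
        (n + 1 : ℝ) / (n + 2)) ∧
    (0 < r → r ≤ 1 →
      (n + 1 : ℝ) / (n + 2) ≤
        (((∑ i ∈ Finset.Icc 1 n, (i : ℝ) ^ r) / n) /
          ((∑ i ∈ Finset.Icc 1 (n + 1), (i : ℝ) ^ r) / (n + 1))) ^ (1 / r)) := by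
  have hn0 : (0:ℝ) < (n:ℝ) := by exact_mod_cast hn
  have hsum : (∑ i ∈ Finset.Icc 1 (n + 1), (i : ℝ) ^ r)
      = (∑ i ∈ Finset.Icc 1 n, (i : ℝ) ^ r) + ((n:ℝ) + 1) ^ r := by
    rw [Finset.sum_Icc_succ_top (by omega : 1 ≤ n + 1)]
    push_cast
    ring_nf
  set S := ∑ i ∈ Finset.Icc 1 n, (i : ℝ) ^ r with hSdef
  have hSpos : (0:ℝ) ≤ S := Finset.sum_nonneg fun i _ => rpow_nonneg (Nat.cast_nonneg i) r
  constructor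
  · intro hr
    have hr0 : (0:ℝ) < r := lt_of_lt_of_le one_pos hr
    have hApos : (0:ℝ) < ((n:ℝ) + 1) ^ r := rpow_pos_of_pos (by positivity) r
    have hBpos : (0:ℝ) < ((n:ℝ) + 2) ^ r := rpow_pos_of_pos (by positivity) r
    have hS'pos : (0:ℝ) < (∑ i ∈ Finset.Icc 1 (n + 1), (i : ℝ) ^ r) := by
      rw [hsum]; positivity
    have main := main_le hr n hn
    rw [← hSdef] at main
    rw [one_div, Real.rpow_inv_le_iff_of_pos (by positivity) (by positivity) hr0]
    rw [Real.div_rpow (by positivity) (by positivity)]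
    rw [div_le_div_iff₀ (div_pos hS'pos (by positivity)) hBpos]
    rw [hsum]
    rw [div_mul_eq_mul_div, ← mul_div_assoc]
    rw [div_le_div_iff₀ hn0 (by positivity)]
    nlinarith [main]
  · intro hr0 hr
    have hApos : (0:ℝ) < ((n:ℝ) + 1) ^ r := rpow_pos_of_pos (by positivity) r
    have hBpos : (0:ℝ) < ((n:ℝ) + 2) ^ r := rpow_pos_of_pos (by positivity) r
    have hS'pos : (0:ℝ) < (∑ i ∈ Finset.Icc 1 (n + 1), (i : ℝ) ^ r) := by
      rw [hsum]; positivity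
    have main := main_ge hr0 hr n hn
    rw [← hSdef] at main
    rw [one_div, Real.le_rpow_inv_iff_of_pos (by positivity) (by positivity) hr0]
    rw [Real.div_rpow (by positivity) (by positivity)]
    rw [div_le_div_iff₀ hBpos (div_pos hS'pos (by positivity))]
    rw [hsum]
    rw [div_mul_eq_mul_div, ← mul_div_assoc]
    rw [div_le_div_iff₀ (by positivity) hn0]
    nlinarith [main]
end
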